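/- Let $\mu$ be positive and finite on dyadic intervals, $\alpha \geq 0$, and define $\|f\|_{\Lambda_2(\alpha)} = \sup_{J\in\mathcal{D}} \mu(J)^{-1/2-\alpha}\left(\int_J |f - \langle f\rangle_{\widehat{J}}|^2\, d\mu\right)^{1/2}$. Then for any dyadic interval $I$, $\|h_I\|_{\Lambda_2(\alpha)}$ is comparable (with absolute constants) to $m(I)^{-\alpha - 1/2}$, where $m(I)=\min\{\mu(I_-),\mu(I_+)\}$ and $h_I$ is the $\mu$-adapted Haar function. -/

import Mathlib

open MeasureTheory Set

noncomputable section

/-- The dyadic interval `[l·2^{-k}, (l+1)·2^{-k})`. -/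
def dyadicI (k l : ℤ) : Set ℝ :=
  Set.Ico ((l : ℝ) * (2 : ℝ) ^ (-k)) (((l : ℝ) + 1) * (2 : ℝ) ^ (-k))

/-- A dyadic interval indexed by a pair `(generation, position)`. -/
def dI (p : ℤ × ℤ) : Set ℝ := dyadicI p.1 p.2

/-- Left child. -/
def leftCh (p : ℤ × ℤ) : ℤ × ℤ := (p.1 + 1, 2 * p.2)

/-- Right child. -/
def rightCh (p : ℤ × ℤ) : ℤ × ℤ := (p.1 + 1, 2 * p.2 + 1)

/-- Dyadic parent. -/
def par (p : ℤ × ℤ) : ℤ × ℤ := (p.1 - 1, Int.fdiv p.2 2)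

/-- `t`-th dyadic ancestor. -/
def anc (t : ℕ) (p : ℤ × ℤ) : ℤ × ℤ := par^[t] p

/-- The measure `μ` is positive and finite on all dyadic intervals. -/
def posFin (μ : Measure ℝ) : Prop := ∀ p : ℤ × ℤ, 0 < μ (dI p) ∧ μ (dI p) < ⊤

/-- The `μ`-average of `f` over a set `S`. -/
def avg (μ : Measure ℝ) (f : ℝ → ℝ) (S : Set ℝ) : ℝ :=
  (∫ x in S, f x ∂μ) / (μ S).toReal

/-- The `μ`-adapted Haar function of the dyadic interval indexed by `p`. -/
def haar (μ : Measure ℝ) (p : ℤ × ℤ) : ℝ → ℝ := fun x =>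
  Real.sqrt ((μ (dI (leftCh p))).toReal * (μ (dI (rightCh p))).toReal / (μ (dI p)).toReal) *
    ((dI (leftCh p)).indicator (fun _ => ((μ (dI (leftCh p))).toReal)⁻¹) x -
      (dI (rightCh p)).indicator (fun _ => ((μ (dI (rightCh p))).toReal)⁻¹) x)

/-- `m(I) = min(μ(I₋), μ(I₊))`. -/
def mval (μ : Measure ℝ) (p : ℤ × ℤ) : ℝ :=
  min (μ (dI (leftCh p))).toReal (μ (dI (rightCh p))).toReal

/-- The martingale Lipschitz `Λ₂(α)` norm (as an extended real):
`sup_J μ(J)^{-1/2-α} (∫_J |f - ⟨f⟩_{Ĵ}|² dμ)^{1/2}`. -/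
def lipNorm (μ : Measure ℝ) (α : ℝ) (f : ℝ → ℝ) : ENNReal :=
  ⨆ p : ℤ × ℤ, ENNReal.ofReal (((μ (dI p)).toReal) ^ (-(1/2 : ℝ) - α) *
    Real.sqrt (∫ x in dI p, (f x - avg μ f (dI (par p))) ^ 2 ∂μ))

lemma gpos (k : ℤ) : (0:ℝ) < (2:ℝ) ^ (-k) := zpow_pos two_pos _

lemma dI_nonempty (q : ℤ × ℤ) : (dI q).Nonempty := by
  rw [dI, dyadicI, Set.nonempty_Ico]
  have := gpos q.1
  nlinarith

lemma measurableSet_dI (q : ℤ × ℤ) : MeasurableSet (dI q) := measurableSet_Ico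

lemma eq_child (q : ℤ × ℤ) : q = leftCh (par q) ∨ q = rightCh (par q) := by
  have h : q.2.fdiv 2 = q.2 / 2 := Int.fdiv_eq_ediv_of_nonneg _ (by norm_num)
  rcases Int.even_or_odd q.2 with ⟨m, hm⟩ | ⟨m, hm⟩
  · left; rw [leftCh, par]; ext <;> simp [h] <;> omega
  · right; rw [rightCh, par]; ext <;> simp [h] <;> omega

lemma par_leftCh (p : ℤ × ℤ) : par (leftCh p) = p := by
  rw [par, leftCh]; ext <;> simp [Int.fdiv_eq_ediv_of_nonneg _ (by norm_num : (0:ℤ) ≤ 2)] <;> omega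

lemma par_rightCh (p : ℤ × ℤ) : par (rightCh p) = p := by
  rw [par, rightCh]; ext <;> simp [Int.fdiv_eq_ediv_of_nonneg _ (by norm_num : (0:ℤ) ≤ 2)] <;> omega

lemma dI_subset_par (q : ℤ × ℤ) : dI q ⊆ dI (par q) := by
  rcases q with ⟨k, l⟩
  have h : l.fdiv 2 = l / 2 := Int.fdiv_eq_ediv_of_nonneg _ (by norm_num)
  have h1 : 2 * (l / 2) ≤ l := by omega
  have h2 : l + 1 ≤ 2 * (l / 2) + 2 := by omega
  have hz : (2:ℝ) ^ (-(k - 1)) = 2 * (2:ℝ) ^ (-k) := by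
    rw [show -(k-1) = -k + 1 by ring, zpow_add₀ (by norm_num : (2:ℝ) ≠ 0)]; ring
  have hp := gpos k
  simp only [dI, dyadicI, par, h]
  apply Set.Ico_subset_Ico
  · rw [hz]
    have : ((2 * (l / 2) : ℤ) : ℝ) ≤ (l:ℝ) := by exact_mod_cast h1
    push_cast at this ⊢
    nlinarith
  · rw [hz]
    have : ((l:ℝ) + 1) ≤ ((2 * (l / 2) + 2 : ℤ) : ℝ) := by exact_mod_cast h2
    push_cast at this ⊢
    nlinarith

lemma dI_disjoint (q r : ℤ × ℤ) (h1 : q.1 = r.1) (h2 : q ≠ r) : Disjoint (dI q) (dI r) := by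
  rcases q with ⟨k, l⟩; rcases r with ⟨k', l'⟩
  simp only [Prod.mk.injEq] at h1 h2
  subst h1
  have hl : l ≠ l' := by tauto
  have hp := gpos k
  rw [dI, dI, dyadicI, dyadicI, Set.Ico_disjoint_Ico]
  rcases lt_or_gt_of_ne hl with h | h
  · have : (l:ℝ) + 1 ≤ (l':ℝ) := by exact_mod_cast h
    calc min (((l:ℝ)+1) * 2^(-k)) (((l':ℝ)+1) * 2^(-k)) ≤ ((l:ℝ)+1) * 2^(-k) := min_le_left _ _
      _ ≤ (l':ℝ) * 2^(-k) := by nlinarith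
      _ ≤ _ := le_max_right _ _
  · have : (l':ℝ) + 1 ≤ (l:ℝ) := by exact_mod_cast h
    calc min (((l:ℝ)+1) * 2^(-k)) (((l':ℝ)+1) * 2^(-k)) ≤ ((l':ℝ)+1) * 2^(-k) := min_le_right _ _
      _ ≤ (l:ℝ) * 2^(-k) := by nlinarith
      _ ≤ _ := le_max_left _ _

lemma anc_fst (t : ℕ) (q : ℤ × ℤ) : (anc t q).1 = q.1 - t := by
  induction t with
  | zero => simp [anc]
  | succ n ih =>
    have : anc (n+1) q = par (anc n q) := Function.iterate_succ_apply' _ _ _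
    rw [this, par]
    simp only []
    rw [ih]; push_cast; ring

lemma dI_subset_anc (t : ℕ) (q : ℤ × ℤ) : dI q ⊆ dI (anc t q) := by
  induction t with
  | zero => simp [anc]
  | succ n ih =>
    rw [anc, Function.iterate_succ_apply']
    exact ih.trans (dI_subset_par _)

lemma anc_one (q : ℤ × ℤ) : anc 1 q = par q := rfl

lemma anc_anc (s t : ℕ) (q : ℤ × ℤ) : anc s (anc t q) = anc (s + t) q :=
  (Function.iterate_add_apply _ _ _ _).symm

lemma dyadic_cases {q p : ℤ × ℤ} (h : p.1 ≤ q.1) :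
    (dI q ⊆ dI p ∧ anc (q.1 - p.1).toNat q = p) ∨ Disjoint (dI q) (dI p) := by
  set r := anc (q.1 - p.1).toNat q with hr
  have hfst : r.1 = p.1 := by rw [hr, anc_fst]; omega
  by_cases hrp : r = p
  · left; exact ⟨hrp ▸ dI_subset_anc _ _, hrp⟩
  · right
    exact (dI_disjoint r p hfst hrp).mono_left (dI_subset_anc _ _)


open MeasureTheory Set

section
variable {k l : ℤ}

lemma children_disjoint (p : ℤ × ℤ) : Disjoint (dI (leftCh p)) (dI (rightCh p)) := by
  apply dI_disjoint
  · rfl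
  · intro h; simp only [leftCh, rightCh, Prod.ext_iff] at h; omega

lemma children_union (p : ℤ × ℤ) : dI (leftCh p) ∪ dI (rightCh p) = dI p := by
  rcases p with ⟨k, l⟩
  simp only [dI, dyadicI, leftCh, rightCh]
  have hz : (2:ℝ) ^ (-(k + 1)) = (2:ℝ) ^ (-k) / 2 := by
    rw [show -(k+1) = -k - 1 by ring, zpow_sub₀ (by norm_num : (2:ℝ) ≠ 0)]; norm_num
  push_cast
  rw [Set.Ico_union_Ico_eq_Ico]
  · congr 1 <;> (rw [hz]; ring)
  · have hp := gpos (k+1); push_cast at hp; nlinarith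
  · have hp := gpos (k+1); push_cast at hp; nlinarith
end

section
variable {μ : Measure ℝ} (hμ : posFin μ) (p : ℤ × ℤ)

lemma measure_add (hμ : posFin μ) (p : ℤ × ℤ) :
    (μ (dI p)).toReal = (μ (dI (leftCh p))).toReal + (μ (dI (rightCh p))).toReal := by
  rw [← children_union p, measure_union (children_disjoint p) (measurableSet_dI _),
    ENNReal.toReal_add (hμ _).2.ne (hμ _).2.ne]
end

open MeasureTheory Set

section Integrals
variable {μ : Measure ℝ}

lemma left_subset (p : ℤ × ℤ) : dI (leftCh p) ⊆ dI p :=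
  (children_union p) ▸ Set.subset_union_left

lemma right_subset (p : ℤ × ℤ) : dI (rightCh p) ⊆ dI p :=
  (children_union p) ▸ Set.subset_union_right

lemma setIntegral_ind_const (S T : Set ℝ) (hT : MeasurableSet T) (v : ℝ) :
    ∫ x in S, T.indicator (fun _ => v) x ∂μ = (μ (S ∩ T)).toReal * v := by
  rw [setIntegral_indicator hT, setIntegral_const, smul_eq_mul, measureReal_def]

lemma integrable_ind {T : Set ℝ} (hT : MeasurableSet T) (hfin : μ T < ⊤) (v : ℝ) :
    Integrable (T.indicator (fun _ => v)) μ :=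
  (integrable_indicator_iff hT).2 (integrableOn_const hfin.ne)

lemma intH (hμ : posFin μ) (p : ℤ × ℤ) (S : Set ℝ) :
    ∫ x in S, haar μ p x ∂μ =
      Real.sqrt ((μ (dI (leftCh p))).toReal * (μ (dI (rightCh p))).toReal / (μ (dI p)).toReal) *
      ((μ (S ∩ dI (leftCh p))).toReal * ((μ (dI (leftCh p))).toReal)⁻¹
        - (μ (S ∩ dI (rightCh p))).toReal * ((μ (dI (rightCh p))).toReal)⁻¹) := by
  unfold haar
  rw [integral_const_mul, integral_sub
    ((integrable_ind (measurableSet_dI _) (hμ _).2 _).integrableOn)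
    ((integrable_ind (measurableSet_dI _) (hμ _).2 _).integrableOn),
    setIntegral_ind_const _ _ (measurableSet_dI _), setIntegral_ind_const _ _ (measurableSet_dI _)]

lemma haar_sq (hμ : posFin μ) (p : ℤ × ℤ) (x : ℝ) :
    (haar μ p x) ^ 2 =
      (dI (leftCh p)).indicator (fun _ =>
        ((μ (dI (leftCh p))).toReal * (μ (dI (rightCh p))).toReal / (μ (dI p)).toReal)
          * (((μ (dI (leftCh p))).toReal)⁻¹)^2) x +
      (dI (rightCh p)).indicator (fun _ =>
        ((μ (dI (leftCh p))).toReal * (μ (dI (rightCh p))).toReal / (μ (dI p)).toReal)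
          * (((μ (dI (rightCh p))).toReal)⁻¹)^2) x := by
  have hX : (0:ℝ) ≤ (μ (dI (leftCh p))).toReal * (μ (dI (rightCh p))).toReal / (μ (dI p)).toReal :=
    div_nonneg (mul_nonneg ENNReal.toReal_nonneg ENNReal.toReal_nonneg) ENNReal.toReal_nonneg
  unfold haar
  by_cases hx : x ∈ dI (leftCh p) <;> by_cases hx' : x ∈ dI (rightCh p)
  · exact absurd hx' (Set.disjoint_left.1 (children_disjoint p) hx)
  · simp only [Set.indicator_of_mem hx, Set.indicator_of_notMem hx']
    rw [mul_pow, Real.sq_sqrt hX]; ring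
  · simp only [Set.indicator_of_mem hx', Set.indicator_of_notMem hx]
    rw [mul_pow, Real.sq_sqrt hX]; ring
  · simp only [Set.indicator_of_notMem hx, Set.indicator_of_notMem hx']
    ring

lemma intH2 (hμ : posFin μ) (p : ℤ × ℤ) (S : Set ℝ) :
    ∫ x in S, (haar μ p x) ^ 2 ∂μ =
      ((μ (dI (leftCh p))).toReal * (μ (dI (rightCh p))).toReal / (μ (dI p)).toReal) *
      ((μ (S ∩ dI (leftCh p))).toReal * (((μ (dI (leftCh p))).toReal)⁻¹)^2
        + (μ (S ∩ dI (rightCh p))).toReal * (((μ (dI (rightCh p))).toReal)⁻¹)^2) := by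
  have : ∀ x, (haar μ p x) ^ 2 = _ := haar_sq hμ p
  rw [integral_congr_ae (Filter.Eventually.of_forall (fun x => haar_sq hμ p x)),
    integral_add ((integrable_ind (measurableSet_dI _) (hμ _).2 _).integrableOn)
      ((integrable_ind (measurableSet_dI _) (hμ _).2 _).integrableOn),
    setIntegral_ind_const _ _ (measurableSet_dI _), setIntegral_ind_const _ _ (measurableSet_dI _)]
  ring

lemma avg_zero_sup (hμ : posFin μ) (p : ℤ × ℤ) {T : Set ℝ} (hT : dI p ⊆ T) :
    avg μ (haar μ p) T = 0 := by
  have ha : ((μ (dI (leftCh p))).toReal) ≠ 0 :=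
    (ENNReal.toReal_pos (hμ _).1.ne' (hμ _).2.ne).ne'
  have hb : ((μ (dI (rightCh p))).toReal) ≠ 0 :=
    (ENNReal.toReal_pos (hμ _).1.ne' (hμ _).2.ne).ne'
  rw [avg, intH hμ p,
    Set.inter_eq_self_of_subset_right ((left_subset p).trans hT),
    Set.inter_eq_self_of_subset_right ((right_subset p).trans hT),
    mul_inv_cancel₀ ha, mul_inv_cancel₀ hb]
  simp

lemma avg_zero_disj (hμ : posFin μ) (p : ℤ × ℤ) {T : Set ℝ} (hT : Disjoint T (dI p)) :
    avg μ (haar μ p) T = 0 := by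
  have h1 : μ (T ∩ dI (leftCh p)) = 0 :=
    measure_mono_null (fun x hx => (hT.inter_eq ▸ Set.inter_subset_inter_right T (left_subset p)) hx)
      (by simp)
  have h2 : μ (T ∩ dI (rightCh p)) = 0 :=
    measure_mono_null (fun x hx => (hT.inter_eq ▸ Set.inter_subset_inter_right T (right_subset p)) hx)
      (by simp)
  rw [avg, intH hμ p, h1, h2]
  simp

lemma haar_zero_off (p : ℤ × ℤ) {x : ℝ} (hx : x ∉ dI p) : haar μ p x = 0 := by
  unfold haar
  rw [Set.indicator_of_notMem (fun h => hx (left_subset p h)),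
    Set.indicator_of_notMem (fun h => hx (right_subset p h))]
  ring

lemma haar_on_left (p : ℤ × ℤ) {x : ℝ} (hx : x ∈ dI (leftCh p)) :
    haar μ p x =
      Real.sqrt ((μ (dI (leftCh p))).toReal * (μ (dI (rightCh p))).toReal / (μ (dI p)).toReal)
        * ((μ (dI (leftCh p))).toReal)⁻¹ := by
  unfold haar
  rw [Set.indicator_of_mem hx,
    Set.indicator_of_notMem (Set.disjoint_left.1 (children_disjoint p) hx)]
  ring

lemma haar_on_right (p : ℤ × ℤ) {x : ℝ} (hx : x ∈ dI (rightCh p)) :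
    haar μ p x =
      -(Real.sqrt ((μ (dI (leftCh p))).toReal * (μ (dI (rightCh p))).toReal / (μ (dI p)).toReal)
        * ((μ (dI (rightCh p))).toReal)⁻¹) := by
  unfold haar
  rw [Set.indicator_of_mem hx,
    Set.indicator_of_notMem (Set.disjoint_right.1 (children_disjoint p) hx)]
  ring

lemma avg_const {f : ℝ → ℝ} {T : Set ℝ} (hT : MeasurableSet T) (h0 : 0 < μ T) (hfin : μ T < ⊤)
    {v : ℝ} (h : ∀ x ∈ T, f x = v) : avg μ f T = v := by
  rw [avg, setIntegral_congr_fun hT (fun x hx => h x hx), setIntegral_const, smul_eq_mul, measureReal_def]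
  rw [mul_comm, mul_div_assoc, div_self (ENNReal.toReal_pos h0.ne' hfin.ne).ne', mul_one]

end Integrals

open MeasureTheory Set

section Cases
variable {μ : Measure ℝ}

lemma int_left (hμ : posFin μ) (p : ℤ × ℤ) :
    ∫ x in dI (leftCh p), (haar μ p x - avg μ (haar μ p) (dI (par (leftCh p)))) ^ 2 ∂μ =
      (μ (dI (rightCh p))).toReal /
        ((μ (dI (leftCh p))).toReal + (μ (dI (rightCh p))).toReal) := by
  have ha : 0 < (μ (dI (leftCh p))).toReal := ENNReal.toReal_pos (hμ _).1.ne' (hμ _).2.ne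
  have hb : 0 < (μ (dI (rightCh p))).toReal := ENNReal.toReal_pos (hμ _).1.ne' (hμ _).2.ne
  have havg : avg μ (haar μ p) (dI (par (leftCh p))) = 0 := by
    rw [par_leftCh]; exact avg_zero_sup hμ p subset_rfl
  rw [havg]
  simp only [sub_zero]
  rw [intH2 hμ p, Set.inter_self, (children_disjoint p).inter_eq, measure_empty,
    measure_add hμ p]
  simp only [ENNReal.toReal_zero]
  field_simp
  ring

lemma int_right (hμ : posFin μ) (p : ℤ × ℤ) :
    ∫ x in dI (rightCh p), (haar μ p x - avg μ (haar μ p) (dI (par (rightCh p)))) ^ 2 ∂μ =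
      (μ (dI (leftCh p))).toReal /
        ((μ (dI (leftCh p))).toReal + (μ (dI (rightCh p))).toReal) := by
  have ha : 0 < (μ (dI (leftCh p))).toReal := ENNReal.toReal_pos (hμ _).1.ne' (hμ _).2.ne
  have hb : 0 < (μ (dI (rightCh p))).toReal := ENNReal.toReal_pos (hμ _).1.ne' (hμ _).2.ne
  have havg : avg μ (haar μ p) (dI (par (rightCh p))) = 0 := by
    rw [par_rightCh]; exact avg_zero_sup hμ p subset_rfl
  rw [havg]
  simp only [sub_zero]
  rw [intH2 hμ p, Set.inter_self, Set.inter_comm, (children_disjoint p).inter_eq, measure_empty,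
    measure_add hμ p]
  simp only [ENNReal.toReal_zero]
  field_simp
  ring

lemma term_le (hμ : posFin μ) {α : ℝ} (hα : 0 ≤ α) (p q : ℤ × ℤ) :
    (μ (dI q)).toReal ^ (-(1/2:ℝ) - α) *
      Real.sqrt (∫ x in dI q, (haar μ p x - avg μ (haar μ p) (dI (par q))) ^ 2 ∂μ) ≤
    (mval μ p) ^ (-(1/2:ℝ) - α) := by
  have ha : 0 < (μ (dI (leftCh p))).toReal := ENNReal.toReal_pos (hμ _).1.ne' (hμ _).2.ne
  have hb : 0 < (μ (dI (rightCh p))).toReal := ENNReal.toReal_pos (hμ _).1.ne' (hμ _).2.ne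
  have hm : 0 < mval μ p := lt_min ha hb
  have he : -(1/2:ℝ) - α ≤ 0 := by linarith
  have hzero : (∀ x ∈ dI q, haar μ p x = avg μ (haar μ p) (dI (par q))) →
      (μ (dI q)).toReal ^ (-(1/2:ℝ) - α) *
        Real.sqrt (∫ x in dI q, (haar μ p x - avg μ (haar μ p) (dI (par q))) ^ 2 ∂μ) ≤
      (mval μ p) ^ (-(1/2:ℝ) - α) := by
    intro h
    have hi : ∫ x in dI q, (haar μ p x - avg μ (haar μ p) (dI (par q))) ^ 2 ∂μ = 0 := by
      rw [setIntegral_congr_fun (measurableSet_dI q) (g := fun _ => (0:ℝ))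
        (fun x hx => by rw [h x hx]; ring)]
      simp
    rw [hi, Real.sqrt_zero, mul_zero]
    exact Real.rpow_nonneg hm.le _
  have hdisjcase : Disjoint (dI q) (dI p) →
      (μ (dI q)).toReal ^ (-(1/2:ℝ) - α) *
        Real.sqrt (∫ x in dI q, (haar μ p x - avg μ (haar μ p) (dI (par q))) ^ 2 ∂μ) ≤
      (mval μ p) ^ (-(1/2:ℝ) - α) := by
    intro hd
    have havg0 : avg μ (haar μ p) (dI (par q)) = 0 := by
      rcases le_or_gt p.1 (par q).1 with h | h
      · rcases dyadic_cases h with ⟨hsub, -⟩ | hdisj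
        · obtain ⟨x, hx⟩ := dI_nonempty q
          exact absurd (hsub (dI_subset_par q hx)) (Set.disjoint_left.1 hd hx)
        · exact avg_zero_disj hμ p hdisj
      · rcases dyadic_cases (le_of_lt h) (q := p) (p := par q) with ⟨hsub, -⟩ | hdisj
        · exact avg_zero_sup hμ p hsub
        · exact avg_zero_disj hμ p hdisj.symm
    exact hzero (fun x hx => by
      rw [haar_zero_off p (Set.disjoint_left.1 hd hx), havg0])
  rcases le_or_gt q.1 p.1 with hle | hlt
  · rcases dyadic_cases (q := p) (p := q) hle with ⟨hsub, -⟩ | hdisj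
    · -- dI p ⊆ dI q
      have havg0 : avg μ (haar μ p) (dI (par q)) = 0 :=
        avg_zero_sup hμ p (hsub.trans (dI_subset_par q))
      have hi : ∫ x in dI q, (haar μ p x - avg μ (haar μ p) (dI (par q))) ^ 2 ∂μ = 1 := by
        rw [havg0]
        simp only [sub_zero]
        rw [intH2 hμ p,
          Set.inter_eq_self_of_subset_right ((left_subset p).trans hsub),
          Set.inter_eq_self_of_subset_right ((right_subset p).trans hsub),
          measure_add hμ p]
        field_simp
        ring
      rw [hi, Real.sqrt_one, mul_one]
      apply Real.rpow_le_rpow_of_nonpos hm _ he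
      calc mval μ p ≤ (μ (dI (leftCh p))).toReal := min_le_left _ _
        _ ≤ (μ (dI p)).toReal := by rw [measure_add hμ p]; linarith
        _ ≤ (μ (dI q)).toReal :=
          (ENNReal.toReal_le_toReal (hμ p).2.ne (hμ q).2.ne).2 (measure_mono hsub)
    · exact hdisjcase hdisj.symm
  · rcases dyadic_cases hlt.le with ⟨hsub, hanc⟩ | hdisj
    · by_cases ht : (q.1 - p.1).toNat = 1
      · -- q is a child of p
        have hpar : par q = p := by rw [← anc_one, show (1:ℕ) = (q.1 - p.1).toNat from ht.symm]; exact hanc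
        rcases eq_child q with hq | hq
        · rw [hpar] at hq
          subst hq
          rw [int_left hμ p]
          have h1 : Real.sqrt ((μ (dI (rightCh p))).toReal /
              ((μ (dI (leftCh p))).toReal + (μ (dI (rightCh p))).toReal)) ≤ 1 :=
            Real.sqrt_le_one.2 ((div_le_one (by linarith)).2 (by linarith))
          calc (μ (dI (leftCh p))).toReal ^ (-(1/2:ℝ) - α) * _ ≤
              (μ (dI (leftCh p))).toReal ^ (-(1/2:ℝ) - α) * 1 :=
                mul_le_mul_of_nonneg_left h1 (Real.rpow_nonneg ha.le _)
            _ = (μ (dI (leftCh p))).toReal ^ (-(1/2:ℝ) - α) := mul_one _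
            _ ≤ (mval μ p) ^ (-(1/2:ℝ) - α) :=
                Real.rpow_le_rpow_of_nonpos hm (min_le_left _ _) he
        · rw [hpar] at hq
          subst hq
          rw [int_right hμ p]
          have h1 : Real.sqrt ((μ (dI (leftCh p))).toReal /
              ((μ (dI (leftCh p))).toReal + (μ (dI (rightCh p))).toReal)) ≤ 1 :=
            Real.sqrt_le_one.2 ((div_le_one (by linarith)).2 (by linarith))
          calc (μ (dI (rightCh p))).toReal ^ (-(1/2:ℝ) - α) * _ ≤
              (μ (dI (rightCh p))).toReal ^ (-(1/2:ℝ) - α) * 1 :=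
                mul_le_mul_of_nonneg_left h1 (Real.rpow_nonneg hb.le _)
            _ = (μ (dI (rightCh p))).toReal ^ (-(1/2:ℝ) - α) := mul_one _
            _ ≤ (mval μ p) ^ (-(1/2:ℝ) - α) :=
                Real.rpow_le_rpow_of_nonpos hm (min_le_right _ _) he
      · -- t ≥ 2 : constant case
        have ht2 : 2 ≤ (q.1 - p.1).toNat := by omega
        set t := (q.1 - p.1).toNat with htdef
        have hr : par (anc (t-1) q) = p := by
          rw [← anc_one, anc_anc, show 1 + (t-1) = t from by omega]
          exact hanc
        have hsubr : dI (par q) ⊆ dI (anc (t-1) q) := by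
          have h2 := dI_subset_anc (t-2) (anc 1 q)
          rw [anc_anc, show t-2+1 = t-1 from by omega] at h2
          rw [anc_one] at h2
          exact h2
        rcases eq_child (anc (t-1) q) with hc | hc
        · rw [hr] at hc
          rw [hc] at hsubr
          have havg : avg μ (haar μ p) (dI (par q)) =
              Real.sqrt ((μ (dI (leftCh p))).toReal * (μ (dI (rightCh p))).toReal /
                (μ (dI p)).toReal) * ((μ (dI (leftCh p))).toReal)⁻¹ :=
            avg_const (measurableSet_dI _) (hμ _).1 (hμ _).2
              (fun x hx => haar_on_left p (hsubr hx))
          exact hzero (fun x hx => by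
            rw [havg]; exact haar_on_left p (hsubr (dI_subset_par q hx)))
        · rw [hr] at hc
          rw [hc] at hsubr
          have havg : avg μ (haar μ p) (dI (par q)) =
              -(Real.sqrt ((μ (dI (leftCh p))).toReal * (μ (dI (rightCh p))).toReal /
                (μ (dI p)).toReal) * ((μ (dI (rightCh p))).toReal)⁻¹) :=
            avg_const (measurableSet_dI _) (hμ _).1 (hμ _).2
              (fun x hx => haar_on_right p (hsubr hx))
          exact hzero (fun x hx => by
            rw [havg]; exact haar_on_right p (hsubr (dI_subset_par q hx)))
    · exact hdisjcase hdisj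

end Cases

theorem haar_lipschitz_norm_comparable :
    ∃ c : ℝ, 0 < c ∧ ∀ (μ : Measure ℝ), posFin μ → ∀ (α : ℝ), 0 ≤ α → ∀ (p : ℤ × ℤ),
      ENNReal.ofReal (c⁻¹ * (mval μ p) ^ (-α - 1/2 : ℝ)) ≤ lipNorm μ α (haar μ p) ∧
      lipNorm μ α (haar μ p) ≤ ENNReal.ofReal (c * (mval μ p) ^ (-α - 1/2 : ℝ)) := by
  refine ⟨Real.sqrt 2, Real.sqrt_pos.2 two_pos, fun μ hμ α hα p => ?_⟩
  have ha : 0 < (μ (dI (leftCh p))).toReal := ENNReal.toReal_pos (hμ _).1.ne' (hμ _).2.ne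
  have hb : 0 < (μ (dI (rightCh p))).toReal := ENNReal.toReal_pos (hμ _).1.ne' (hμ _).2.ne
  have hm : 0 < mval μ p := lt_min ha hb
  have he' : (-α - 1/2 : ℝ) = -(1/2:ℝ) - α := by ring
  have hs2 : (1:ℝ) ≤ Real.sqrt 2 := by
    rw [show (1:ℝ) = Real.sqrt 1 from Real.sqrt_one.symm]
    exact Real.sqrt_le_sqrt one_le_two
  constructor
  · -- lower bound
    have key : ∃ q : ℤ × ℤ, (Real.sqrt 2)⁻¹ * (mval μ p) ^ (-α - 1/2 : ℝ) ≤
        (μ (dI q)).toReal ^ (-(1/2:ℝ) - α) *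
          Real.sqrt (∫ x in dI q, (haar μ p x - avg μ (haar μ p) (dI (par q))) ^ 2 ∂μ) := by
      rcases le_total ((μ (dI (leftCh p))).toReal) ((μ (dI (rightCh p))).toReal) with hab | hab
      · refine ⟨leftCh p, ?_⟩
        rw [int_left hμ p, he', show mval μ p = (μ (dI (leftCh p))).toReal from min_eq_left hab,
          mul_comm]
        apply mul_le_mul_of_nonneg_left _ (Real.rpow_nonneg ha.le _)
        rw [← Real.sqrt_inv]
        apply Real.sqrt_le_sqrt
        rw [le_div_iff₀ (by linarith)]
        linarith
      · refine ⟨rightCh p, ?_⟩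
        rw [int_right hμ p, he', show mval μ p = (μ (dI (rightCh p))).toReal from min_eq_right hab,
          mul_comm]
        apply mul_le_mul_of_nonneg_left _ (Real.rpow_nonneg hb.le _)
        rw [← Real.sqrt_inv]
        apply Real.sqrt_le_sqrt
        rw [le_div_iff₀ (by linarith)]
        linarith
    obtain ⟨q, hq⟩ := key
    calc ENNReal.ofReal ((Real.sqrt 2)⁻¹ * (mval μ p) ^ (-α - 1/2 : ℝ)) ≤
        ENNReal.ofReal ((μ (dI q)).toReal ^ (-(1/2:ℝ) - α) *
          Real.sqrt (∫ x in dI q, (haar μ p x - avg μ (haar μ p) (dI (par q))) ^ 2 ∂μ)) :=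
          ENNReal.ofReal_le_ofReal hq
      _ ≤ lipNorm μ α (haar μ p) := le_iSup (fun q : ℤ × ℤ =>
          ENNReal.ofReal ((μ (dI q)).toReal ^ (-(1/2:ℝ) - α) *
            Real.sqrt (∫ x in dI q, (haar μ p x - avg μ (haar μ p) (dI (par q))) ^ 2 ∂μ))) q
  · -- upper bound
    apply iSup_le
    intro q
    apply ENNReal.ofReal_le_ofReal
    refine (term_le hμ hα p q).trans ?_
    rw [he']
    exact le_mul_of_one_le_left (Real.rpow_nonneg hm.le _) hs2
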